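/- If W̃ ⊆ H ⊕ H is a maximally isotropic closed subspace for the form Σ̃((φ₊,φ₋),(ψ₊,ψ₋)) = −i(⟨φ₊,ψ₊⟩ − ⟨φ₋,ψ₋⟩), then W̃ ∩ ({0} × H) = {0}, i.e., if (0, ψ₋) ∈ W̃ then ψ₋ = 0. -/

import Mathlib

/-- The form `Σ̃((φ₊,φ₋),(ψ₊,ψ₋)) = −i(⟨φ₊,ψ₊⟩ − ⟨φ₋,ψ₋⟩)` on `H ⊕ H`. -/
noncomputable def lagrangeFormTilde {H : Type*} [NormedAddCommGroup H] [InnerProductSpace ℂ H]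
    (x y : H × H) : ℂ :=
  -Complex.I * ((inner ℂ x.1 y.1 : ℂ) - inner ℂ x.2 y.2)

/-- If `W̃ ⊆ H ⊕ H` is a maximally isotropic closed subspace for `Σ̃`, then
`W̃ ∩ ({0} × H) = {0}`: if `(0, ψ₋) ∈ W̃` then `ψ₋ = 0`. -/
theorem maximal_isotropic_inter_zero {H : Type*} [NormedAddCommGroup H]
    [InnerProductSpace ℂ H] [CompleteSpace H] (W : Submodule ℂ (H × H))
    (hclosed : IsClosed (W : Set (H × H)))
    (hiso : ∀ x ∈ W, ∀ y ∈ W, lagrangeFormTilde x y = 0)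
    (hmax : ∀ W' : Submodule ℂ (H × H), IsClosed (W' : Set (H × H)) →
      (∀ x ∈ W', ∀ y ∈ W', lagrangeFormTilde x y = 0) → W ≤ W' → W' = W) :
    ∀ ψ : H, ((0 : H), ψ) ∈ W → ψ = 0 := by
  intro ψ hψ
  have h := hiso _ hψ _ hψ
  simpa [lagrangeFormTilde, Complex.ext_iff] using h
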